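/- Let φ, ψ be frames for H such that for some subset I ⊂ ℕ the subfamilies {φ_n : n ∈ I} and {ψ_n : n ∈ I} are Riesz bases for H with lower frame bounds A_{φ,1} and A_{ψ,1} respectively, and let B_{φ,2}, B_{ψ,2} be Bessel bounds of {φ_n : n ∉ I} and {ψ_n : n ∉ I}. Let m ∈ ℓ^∞. If (sup_{n∉I} |m_n|) · B_{φ,2}^{1/2} B_{ψ,2}^{1/2} < (inf_{n∈I} |m_n|) · A_{φ,1}^{1/2} A_{ψ,1}^{1/2}, then the multiplier M_{m,φ,ψ} is bijective. -/

import Mathlib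

open scoped InnerProductSpace ComplexConjugate ENNReal NNReal

/-- `φ` is a Riesz basis with bounds `A ≤ B`: it is complete and the ℓ²-synthesis
inequalities hold. -/
def IsRieszBasisWith {H : Type*} [NormedAddCommGroup H] [InnerProductSpace ℂ H]
    {ι : Type*} (φ : ι → H) (A B : ℝ) : Prop :=
  (Submodule.span ℂ (Set.range φ)).topologicalClosure = ⊤ ∧
  ∀ c : ι → ℂ, Summable (fun n => ‖c n‖ ^ 2) →
    ∃ s : H, HasSum (fun n => c n • φ n) s ∧
      A * ∑' n, ‖c n‖ ^ 2 ≤ ‖s‖ ^ 2 ∧ ‖s‖ ^ 2 ≤ B * ∑' n, ‖c n‖ ^ 2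

/-- `φ` is a Bessel sequence with Bessel bound `B`. -/
def IsBesselWith {H : Type*} [NormedAddCommGroup H] [InnerProductSpace ℂ H]
    {ι : Type*} (φ : ι → H) (B : ℝ) : Prop :=
  ∀ f : H, ∃ s : ℝ, HasSum (fun n => ‖⟪φ n, f⟫_ℂ‖ ^ 2) s ∧ s ≤ B * ‖f‖ ^ 2

/-- `φ` is a frame with bounds `A, B`. -/
def IsFrameWith {H : Type*} [NormedAddCommGroup H] [InnerProductSpace ℂ H]
    {ι : Type*} (φ : ι → H) (A B : ℝ) : Prop :=
  ∀ f : H, ∃ s : ℝ, HasSum (fun n => ‖⟪φ n, f⟫_ℂ‖ ^ 2) s ∧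
    A * ‖f‖ ^ 2 ≤ s ∧ s ≤ B * ‖f‖ ^ 2

section helpers

variable {ι : Type*}

/-- Finite Cauchy-Schwarz in sqrt form. -/
lemma finset_cs (F : Finset ι) (a b : ι → ℝ) (ha : ∀ n, 0 ≤ a n) (hb : ∀ n, 0 ≤ b n) :
    ∑ n ∈ F, a n * b n ≤ Real.sqrt (∑ n ∈ F, a n ^ 2) * Real.sqrt (∑ n ∈ F, b n ^ 2) := by
  have h0 : (0:ℝ) ≤ ∑ n ∈ F, a n * b n :=
    Finset.sum_nonneg fun n _ => mul_nonneg (ha n) (hb n)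
  have h1 := Finset.sum_mul_sq_le_sq_mul_sq F a b
  calc ∑ n ∈ F, a n * b n = Real.sqrt ((∑ n ∈ F, a n * b n) ^ 2) := (Real.sqrt_sq h0).symm
    _ ≤ Real.sqrt ((∑ n ∈ F, a n ^ 2) * ∑ n ∈ F, b n ^ 2) := Real.sqrt_le_sqrt h1
    _ = _ := Real.sqrt_mul (Finset.sum_nonneg fun n _ => sq_nonneg _) _

/-- Cauchy-Schwarz for infinite sums. -/
lemma tsum_cs {a b : ι → ℝ} (ha0 : ∀ n, 0 ≤ a n) (hb0 : ∀ n, 0 ≤ b n)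
    (ha : Summable (fun n => a n ^ 2)) (hb : Summable (fun n => b n ^ 2)) :
    Summable (fun n => a n * b n) ∧
      ∑' n, a n * b n ≤ Real.sqrt (∑' n, a n ^ 2) * Real.sqrt (∑' n, b n ^ 2) := by
  have hsum : Summable (fun n => a n * b n) := by
    refine Summable.of_nonneg_of_le (fun n => mul_nonneg (ha0 n) (hb0 n)) (fun n => ?_)
      ((ha.add hb).div_const 2)
    have h := sq_nonneg (a n - b n)
    show a n * b n ≤ (a n ^ 2 + b n ^ 2) / 2
    nlinarith
  refine ⟨hsum, hsum.tsum_le_of_sum_le fun F => ?_⟩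
  calc ∑ n ∈ F, a n * b n
      ≤ Real.sqrt (∑ n ∈ F, a n ^ 2) * Real.sqrt (∑ n ∈ F, b n ^ 2) := finset_cs F a b ha0 hb0
    _ ≤ Real.sqrt (∑' n, a n ^ 2) * Real.sqrt (∑' n, b n ^ 2) := by
        have h1 : ∑ n ∈ F, a n ^ 2 ≤ ∑' n, a n ^ 2 :=
          Summable.sum_le_tsum F (fun n _ => sq_nonneg _) ha
        have h2 : ∑ n ∈ F, b n ^ 2 ≤ ∑' n, b n ^ 2 :=
          Summable.sum_le_tsum F (fun n _ => sq_nonneg _) hb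
        exact mul_le_mul (Real.sqrt_le_sqrt h1) (Real.sqrt_le_sqrt h2)
          (Real.sqrt_nonneg _) (Real.sqrt_nonneg _)

end helpers

section lems

variable {H : Type*} [NormedAddCommGroup H] [InnerProductSpace ℂ H] {ι : Type*}

lemma bessel_summable {φ : ι → H} {B : ℝ} (hφ : IsBesselWith φ B) (f : H) :
    Summable (fun n => ‖⟪φ n, f⟫_ℂ‖ ^ 2) ∧ ∑' n, ‖⟪φ n, f⟫_ℂ‖ ^ 2 ≤ B * ‖f‖ ^ 2 := by
  obtain ⟨s, hs, hle⟩ := hφ f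
  exact ⟨hs.summable, hs.tsum_eq ▸ hle⟩

lemma bessel_sqrt_bound {φ : ι → H} {B : ℝ} (hφ : IsBesselWith φ B) (hB : 0 ≤ B) (f : H) :
    Real.sqrt (∑' n, ‖⟪φ n, f⟫_ℂ‖ ^ 2) ≤ Real.sqrt B * ‖f‖ := by
  have h := (bessel_summable hφ f).2
  calc Real.sqrt (∑' n, ‖⟪φ n, f⟫_ℂ‖ ^ 2) ≤ Real.sqrt (B * ‖f‖ ^ 2) := Real.sqrt_le_sqrt h
    _ = Real.sqrt B * ‖f‖ := by
        rw [Real.sqrt_mul hB, Real.sqrt_sq (norm_nonneg f)]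

lemma bessel_nonneg [Nontrivial H] {φ : ι → H} {B : ℝ} (hφ : IsBesselWith φ B) : 0 ≤ B := by
  obtain ⟨f, hf⟩ := exists_ne (0 : H)
  obtain ⟨s, hs, hle⟩ := hφ f
  have h0 : 0 ≤ s := hasSum_le (fun n => sq_nonneg _) hasSum_zero hs
  have hf2 : 0 < ‖f‖ ^ 2 := pow_pos (norm_pos_iff.mpr hf) 2
  nlinarith

/-- upper bound for a sum `∑ (μ n * ⟪ψ n, f⟫) • φ n` with Bessel families. -/
lemma multiplier_piece_bound {φ ψ : ι → H} {Bφ Bψ : ℝ}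
    (hφ : IsBesselWith φ Bφ) (hψ : IsBesselWith ψ Bψ) (hBφ : 0 ≤ Bφ) (hBψ : 0 ≤ Bψ)
    {w : ℝ} (hw : 0 ≤ w) {μ : ι → ℂ} (hμ : ∀ n, ‖μ n‖ ≤ w) (f s : H)
    (hs : HasSum (fun n => (μ n * ⟪ψ n, f⟫_ℂ) • φ n) s) :
    ‖s‖ ≤ w * Real.sqrt Bφ * Real.sqrt Bψ * ‖f‖ := by
  rcases eq_or_ne s 0 with rfl | hs0
  · simp only [norm_zero]; positivity
  have h1 : HasSum (fun n => (μ n * ⟪ψ n, f⟫_ℂ) * ⟪s, φ n⟫_ℂ) ⟪s, s⟫_ℂ := by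
    have := (innerSL ℂ s).hasSum hs
    simpa only [innerSL_apply_apply, inner_smul_right] using this
  -- summability of norms
  have haψ := (bessel_summable hψ f).1
  have haφ := (bessel_summable hφ s).1
  have hcs := tsum_cs (a := fun n => ‖⟪ψ n, f⟫_ℂ‖) (b := fun n => ‖⟪φ n, s⟫_ℂ‖)
    (fun n => norm_nonneg _) (fun n => norm_nonneg _) haψ haφ
  have hnorm : ∀ n, ‖(μ n * ⟪ψ n, f⟫_ℂ) * ⟪s, φ n⟫_ℂ‖
      ≤ w * (‖⟪ψ n, f⟫_ℂ‖ * ‖⟪φ n, s⟫_ℂ‖) := fun n => by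
    rw [norm_mul, norm_mul, norm_inner_symm s]
    have := hμ n
    have h2 : ‖⟪ψ n, f⟫_ℂ‖ * ‖⟪φ n, s⟫_ℂ‖ ≥ 0 := by positivity
    calc ‖μ n‖ * ‖⟪ψ n, f⟫_ℂ‖ * ‖⟪φ n, s⟫_ℂ‖
        = ‖μ n‖ * (‖⟪ψ n, f⟫_ℂ‖ * ‖⟪φ n, s⟫_ℂ‖) := by ring
      _ ≤ w * (‖⟪ψ n, f⟫_ℂ‖ * ‖⟪φ n, s⟫_ℂ‖) := by
          exact mul_le_mul_of_nonneg_right (hμ n) h2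
  have hsummn : Summable (fun n => ‖(μ n * ⟪ψ n, f⟫_ℂ) * ⟪s, φ n⟫_ℂ‖) :=
    Summable.of_nonneg_of_le (fun n => norm_nonneg _) hnorm (hcs.1.mul_left w)
  have key : ‖s‖ ^ 2 ≤ w * Real.sqrt Bφ * Real.sqrt Bψ * ‖f‖ * ‖s‖ := by
    have e1 : (‖s‖ : ℝ) ^ 2 ≤ ‖⟪s, s⟫_ℂ‖ := by
      rw [← inner_self_eq_norm_sq (𝕜 := ℂ) s]
      exact RCLike.re_le_norm _
    calc (‖s‖:ℝ) ^ 2 ≤ ‖⟪s, s⟫_ℂ‖ := e1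
      _ = ‖∑' n, (μ n * ⟪ψ n, f⟫_ℂ) * ⟪s, φ n⟫_ℂ‖ := by rw [h1.tsum_eq]
      _ ≤ ∑' n, ‖(μ n * ⟪ψ n, f⟫_ℂ) * ⟪s, φ n⟫_ℂ‖ := norm_tsum_le_tsum_norm hsummn
      _ ≤ ∑' n, w * (‖⟪ψ n, f⟫_ℂ‖ * ‖⟪φ n, s⟫_ℂ‖) :=
          Summable.tsum_le_tsum hnorm hsummn (hcs.1.mul_left w)
      _ = w * ∑' n, ‖⟪ψ n, f⟫_ℂ‖ * ‖⟪φ n, s⟫_ℂ‖ := tsum_mul_left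
      _ ≤ w * (Real.sqrt (∑' n, ‖⟪ψ n, f⟫_ℂ‖ ^ 2) * Real.sqrt (∑' n, ‖⟪φ n, s⟫_ℂ‖ ^ 2)) :=
          mul_le_mul_of_nonneg_left hcs.2 hw
      _ ≤ w * ((Real.sqrt Bψ * ‖f‖) * (Real.sqrt Bφ * ‖s‖)) := by
          have b1 := bessel_sqrt_bound hψ hBψ f
          have b2 := bessel_sqrt_bound hφ hBφ s
          exact mul_le_mul_of_nonneg_left
            (mul_le_mul b1 b2 (Real.sqrt_nonneg _) (by positivity)) hw
      _ = w * Real.sqrt Bφ * Real.sqrt Bψ * ‖f‖ * ‖s‖ := by ring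
  have hsp : (0:ℝ) < ‖s‖ := norm_pos_iff.mpr hs0
  have := key
  rw [pow_two] at this
  exact le_of_mul_le_mul_right this hsp

end lems

section synth

variable {H : Type*} [NormedAddCommGroup H] [InnerProductSpace ℂ H] {ι : Type*}

lemma bessel_finite_synth {φ : ι → H} {B : ℝ} (hφ : IsBesselWith φ B)
    (c : ι → ℂ) (F : Finset ι) :
    ‖∑ n ∈ F, c n • φ n‖ ≤ Real.sqrt B * Real.sqrt (∑ n ∈ F, ‖c n‖ ^ 2) := by
  set s := ∑ n ∈ F, c n • φ n with hsdef
  rcases eq_or_ne s 0 with h0 | h0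
  · rw [h0, norm_zero]; positivity
  have hsp : (0:ℝ) < ‖s‖ := norm_pos_iff.mpr h0
  have hBs := bessel_summable hφ s
  have e1 : ⟪s, s⟫_ℂ = ∑ n ∈ F, c n * ⟪s, φ n⟫_ℂ := by
    rw [hsdef, inner_sum]
    exact Finset.sum_congr rfl fun n _ => inner_smul_right _ _ _
  have e2 : ‖s‖ ^ 2 ≤ ∑ n ∈ F, ‖c n‖ * ‖⟪φ n, s⟫_ℂ‖ := by
    calc (‖s‖:ℝ) ^ 2 ≤ ‖⟪s, s⟫_ℂ‖ := by
          rw [← inner_self_eq_norm_sq (𝕜 := ℂ) s]; exact RCLike.re_le_norm _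
      _ = ‖∑ n ∈ F, c n * ⟪s, φ n⟫_ℂ‖ := by rw [e1]
      _ ≤ ∑ n ∈ F, ‖c n * ⟪s, φ n⟫_ℂ‖ := norm_sum_le _ _
      _ = ∑ n ∈ F, ‖c n‖ * ‖⟪φ n, s⟫_ℂ‖ :=
          Finset.sum_congr rfl fun n _ => by rw [norm_mul, norm_inner_symm s]
  have e3 : ∑ n ∈ F, ‖c n‖ * ‖⟪φ n, s⟫_ℂ‖
      ≤ Real.sqrt (∑ n ∈ F, ‖c n‖ ^ 2) * Real.sqrt (∑ n ∈ F, ‖⟪φ n, s⟫_ℂ‖ ^ 2) :=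
    finset_cs F _ _ (fun n => norm_nonneg _) (fun n => norm_nonneg _)
  have e4 : ∑ n ∈ F, ‖⟪φ n, s⟫_ℂ‖ ^ 2 ≤ B * ‖s‖ ^ 2 :=
    le_trans (Summable.sum_le_tsum F (fun n _ => sq_nonneg _) hBs.1) hBs.2
  have hB0 : 0 ≤ B := by
    have h5 : (0:ℝ) ≤ ∑ n ∈ F, ‖⟪φ n, s⟫_ℂ‖ ^ 2 := Finset.sum_nonneg fun n _ => sq_nonneg _
    nlinarith [pow_pos hsp 2]
  have e5 : Real.sqrt (∑ n ∈ F, ‖⟪φ n, s⟫_ℂ‖ ^ 2) ≤ Real.sqrt B * ‖s‖ := by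
    calc Real.sqrt (∑ n ∈ F, ‖⟪φ n, s⟫_ℂ‖ ^ 2) ≤ Real.sqrt (B * ‖s‖ ^ 2) := Real.sqrt_le_sqrt e4
      _ = Real.sqrt B * ‖s‖ := by rw [Real.sqrt_mul hB0, Real.sqrt_sq hsp.le]
  have key : ‖s‖ ^ 2 ≤ Real.sqrt B * Real.sqrt (∑ n ∈ F, ‖c n‖ ^ 2) * ‖s‖ := by
    calc (‖s‖:ℝ)^2 ≤ ∑ n ∈ F, ‖c n‖ * ‖⟪φ n, s⟫_ℂ‖ := e2
      _ ≤ Real.sqrt (∑ n ∈ F, ‖c n‖ ^ 2) * Real.sqrt (∑ n ∈ F, ‖⟪φ n, s⟫_ℂ‖ ^ 2) := e3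
      _ ≤ Real.sqrt (∑ n ∈ F, ‖c n‖ ^ 2) * (Real.sqrt B * ‖s‖) :=
          mul_le_mul_of_nonneg_left e5 (Real.sqrt_nonneg _)
      _ = Real.sqrt B * Real.sqrt (∑ n ∈ F, ‖c n‖ ^ 2) * ‖s‖ := by ring
  rw [pow_two] at key
  exact le_of_mul_le_mul_right key hsp

lemma bessel_synthesis [CompleteSpace H] {φ : ι → H} {B : ℝ} (hφ : IsBesselWith φ B)
    (hB : 0 ≤ B) {c : ι → ℂ} (hc : Summable fun n => ‖c n‖ ^ 2) :
    ∃ s : H, HasSum (fun n => c n • φ n) s := by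
  suffices h : Summable fun n => c n • φ n from ⟨_, h.hasSum⟩
  refine summable_iff_vanishing_norm.mpr fun ε hε => ?_
  have hδ : (0:ℝ) < (ε / (Real.sqrt B + 1)) ^ 2 := by positivity
  obtain ⟨F, hF⟩ := summable_iff_vanishing_norm.mp hc _ hδ
  refine ⟨F, fun G hG => ?_⟩
  have h1 := bessel_finite_synth hφ c G
  have h2 := hF G hG
  have h3 : ‖∑ n ∈ G, ‖c n‖ ^ 2‖ = ∑ n ∈ G, ‖c n‖ ^ 2 :=
    Real.norm_of_nonneg (Finset.sum_nonneg fun n _ => sq_nonneg _)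
  rw [h3] at h2
  calc ‖∑ n ∈ G, c n • φ n‖ ≤ Real.sqrt B * Real.sqrt (∑ n ∈ G, ‖c n‖ ^ 2) := h1
    _ < Real.sqrt B * (ε / (Real.sqrt B + 1)) + (1 : ℝ) * (ε / (Real.sqrt B + 1)) := by
        have h4 : Real.sqrt (∑ n ∈ G, ‖c n‖ ^ 2) < ε / (Real.sqrt B + 1) := by
          have := Real.sqrt_lt_sqrt (Finset.sum_nonneg fun n _ => sq_nonneg _) h2
          rwa [Real.sqrt_sq (by positivity)] at this
        have h5 : (0:ℝ) < ε / (Real.sqrt B + 1) := by positivity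
        nlinarith [Real.sqrt_nonneg B, Real.sqrt_nonneg (∑ n ∈ G, ‖c n‖ ^ 2)]
    _ = ε := by field_simp
end synth

section riesz

variable {H : Type*} [NormedAddCommGroup H] [InnerProductSpace ℂ H] [CompleteSpace H] {ι : Type*}

lemma rpow_two_eq (x : ℝ) (hx : 0 ≤ x) : x ^ ((2:ℝ≥0∞).toReal) = x ^ 2 := by
  rw [ENNReal.toReal_ofNat, show ((2:ℝ)) = ((2:ℕ):ℝ) by norm_num, Real.rpow_natCast]

lemma riesz_lower_frame {φ : ι → H} {A B1 : ℝ} (hA : 0 < A)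
    (hR : IsRieszBasisWith φ A B1) (f : H)
    (hsum : Summable fun n => ‖⟪φ n, f⟫_ℂ‖ ^ 2) :
    A * ‖f‖ ^ 2 ≤ ∑' n, ‖⟪φ n, f⟫_ℂ‖ ^ 2 := by
  rcases eq_or_ne f 0 with rfl | hf0
  · simpa using tsum_nonneg (fun n : ι => sq_nonneg ‖⟪φ n, (0:H)⟫_ℂ‖)
  have hfpos : (0:ℝ) < ‖f‖ := norm_pos_iff.mpr hf0
  haveI : Fact ((1:ℝ≥0∞) ≤ 2) := ⟨one_le_two⟩
  classical
  have hc2 : ∀ c : lp (fun _ : ι => ℂ) 2, Summable fun n => ‖c n‖ ^ 2 := fun c =>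
    (((lp.memℓp c).summable (p := 2) (by norm_num)).congr
      fun n => rpow_two_eq _ (norm_nonneg _))
  have lpnorm : ∀ c : lp (fun _ : ι => ℂ) 2, ‖c‖ ^ 2 = ∑' n, ‖c n‖ ^ 2 := by
    intro c
    have h := lp.norm_rpow_eq_tsum (p := 2) (by norm_num) c
    rw [rpow_two_eq _ (norm_nonneg c)] at h
    rw [h]
    exact tsum_congr fun n => rpow_two_eq _ (norm_nonneg _)
  have hex : ∀ c : lp (fun _ : ι => ℂ) 2, ∃ s : H, HasSum (fun n => c n • φ n) s ∧
      A * ∑' n, ‖c n‖ ^ 2 ≤ ‖s‖ ^ 2 ∧ ‖s‖ ^ 2 ≤ B1 * ∑' n, ‖c n‖ ^ 2 :=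
    fun c => hR.2 _ (hc2 c)
  set B1' := max B1 0 with hB1'
  -- the synthesis operator
  let T0 : lp (fun _ : ι => ℂ) 2 →ₗ[ℂ] H :=
    { toFun := fun c => (hex c).choose
      map_add' := by
        intro x y
        refine ((hex (x + y)).choose_spec.1.unique ?_)
        have h := (hex x).choose_spec.1.add (hex y).choose_spec.1
        have e : (fun n => (x + y) n • φ n) =
            fun n => x n • φ n + y n • φ n := by
          funext n
          rw [lp.coeFn_add]
          simp [add_smul]
        rw [e]; exact h
      map_smul' := by
        intro a x
        refine ((hex (a • x)).choose_spec.1.unique ?_)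
        have h := (hex x).choose_spec.1.const_smul a
        have e : (fun n => (a • x) n • φ n) = fun n => a • (x n • φ n) := by
          funext n
          rw [lp.coeFn_smul]
          simp [smul_smul]
        rw [e]; exact h }
  have hub : ∀ c, ‖T0 c‖ ≤ Real.sqrt B1' * ‖c‖ := by
    intro c
    have h := (hex c).choose_spec.2.2
    have h2 : ‖T0 c‖ ^ 2 ≤ B1' * ‖c‖ ^ 2 := by
      rw [lpnorm c]
      refine le_trans h (mul_le_mul_of_nonneg_right (le_max_left _ _)
        (tsum_nonneg fun n => sq_nonneg _))
    have h3 := Real.sqrt_le_sqrt h2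
    rwa [Real.sqrt_sq (norm_nonneg _), Real.sqrt_mul (le_max_right B1 0),
      Real.sqrt_sq (norm_nonneg _)] at h3
  let T := T0.mkContinuous (Real.sqrt B1') hub
  have hTapp : ∀ c, T c = (hex c).choose := fun c => rfl
  have hlb : ∀ c, ‖c‖ ≤ (Real.sqrt A)⁻¹ * ‖T c‖ := by
    intro c
    have h : A * ‖c‖ ^ 2 ≤ ‖T c‖ ^ 2 := by
      rw [lpnorm c, hTapp c]
      exact (hex c).choose_spec.2.1
    have h2 : ‖c‖ ^ 2 ≤ ‖T c‖ ^ 2 / A := by rw [le_div_iff₀ hA]; linarith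
    have h3 := Real.sqrt_le_sqrt h2
    rwa [Real.sqrt_sq (norm_nonneg _), Real.sqrt_div (sq_nonneg _),
      Real.sqrt_sq (norm_nonneg _), div_eq_inv_mul] at h3
  have hA' : (0:ℝ) ≤ (Real.sqrt A)⁻¹ := by positivity
  have hanti : AntilipschitzWith ⟨(Real.sqrt A)⁻¹, hA'⟩ T :=
    ContinuousLinearMap.antilipschitz_of_bound T hlb
  have hclosed : IsClosed (Set.range T) :=
    hanti.isClosed_range T.uniformContinuous
  have hsingle : ∀ n, T (lp.single 2 n (1:ℂ)) = φ n := by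
    intro n
    rw [hTapp]
    refine ((hex _).choose_spec.1.unique ?_)
    have e : (fun k => ((lp.single 2 n (1:ℂ) : lp (fun _ : ι => ℂ) 2)) k • φ k)
        = fun k => if k = n then φ n else 0 := by
      funext k
      rcases eq_or_ne k n with rfl | hk
      · rw [lp.single_apply_self]; simp
      · rw [lp.single_apply_ne 2 n _ hk, if_neg hk, zero_smul]
    rw [e]
    exact hasSum_ite_eq n (φ n)
  have htop : LinearMap.range (T : lp (fun _ : ι => ℂ) 2 →ₗ[ℂ] H) = ⊤ := by
    have hspan : Submodule.span ℂ (Set.range φ) ≤ LinearMap.range (T : lp (fun _ : ι => ℂ) 2 →ₗ[ℂ] H) := by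
      rw [Submodule.span_le]
      rintro _ ⟨n, rfl⟩
      exact ⟨lp.single 2 n (1:ℂ), hsingle n⟩
    refine top_unique ?_
    rw [← hR.1]
    refine Submodule.topologicalClosure_minimal _ hspan ?_
    rw [LinearMap.coe_range]
    exact hclosed
  obtain ⟨c, hc⟩ := LinearMap.range_eq_top.mp htop f
  -- the analysis inequality
  have hTc : HasSum (fun n => c n • φ n) f := hc ▸ (hex c).choose_spec.1
  have hclow : ∑' n, ‖c n‖ ^ 2 ≤ ‖f‖ ^ 2 / A := by
    have h := (hex c).choose_spec.2.1
    rw [← hTapp c, show T c = f from hc] at h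
    rw [le_div_iff₀ hA]
    nlinarith [(tsum_nonneg (fun n => sq_nonneg ‖c n‖) : (0:ℝ) ≤ ∑' n, ‖c n‖ ^ 2)]
  have h1 : HasSum (fun n => c n * ⟪f, φ n⟫_ℂ) ⟪f, f⟫_ℂ := by
    have := (innerSL ℂ f).hasSum hTc
    simpa only [innerSL_apply_apply, inner_smul_right] using this
  have hcs := tsum_cs (a := fun n => ‖c n‖) (b := fun n => ‖⟪φ n, f⟫_ℂ‖)
    (fun n => norm_nonneg _) (fun n => norm_nonneg _) (hc2 c) hsum
  set S := ∑' n, ‖⟪φ n, f⟫_ℂ‖ ^ 2 with hS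
  have hS0 : 0 ≤ S := tsum_nonneg fun n => sq_nonneg _
  have hmain : ‖f‖ ^ 2 ≤ Real.sqrt (‖f‖ ^ 2 / A) * Real.sqrt S := by
    have hnormeq : ∀ n, ‖c n * ⟪f, φ n⟫_ℂ‖ = ‖c n‖ * ‖⟪φ n, f⟫_ℂ‖ := fun n => by
      rw [norm_mul, norm_inner_symm f]
    calc (‖f‖:ℝ) ^ 2 ≤ ‖⟪f, f⟫_ℂ‖ := by
          rw [← inner_self_eq_norm_sq (𝕜 := ℂ) f]; exact RCLike.re_le_norm _
      _ = ‖∑' n, c n * ⟪f, φ n⟫_ℂ‖ := by rw [h1.tsum_eq]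
      _ ≤ ∑' n, ‖c n * ⟪f, φ n⟫_ℂ‖ := by
          refine norm_tsum_le_tsum_norm ?_
          refine hcs.1.congr fun n => (hnormeq n).symm
      _ = ∑' n, ‖c n‖ * ‖⟪φ n, f⟫_ℂ‖ := tsum_congr hnormeq
      _ ≤ Real.sqrt (∑' n, ‖c n‖ ^ 2) * Real.sqrt S := hcs.2
      _ ≤ Real.sqrt (‖f‖ ^ 2 / A) * Real.sqrt S :=
          mul_le_mul_of_nonneg_right (Real.sqrt_le_sqrt hclow) (Real.sqrt_nonneg _)
  have e6 : Real.sqrt (‖f‖ ^ 2 / A) = ‖f‖ / Real.sqrt A := by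
    rw [Real.sqrt_div (sq_nonneg _), Real.sqrt_sq (norm_nonneg _)]
  rw [e6] at hmain
  have hsA : (0:ℝ) < Real.sqrt A := Real.sqrt_pos.mpr hA
  have h7 : Real.sqrt A * ‖f‖ ≤ Real.sqrt S := by
    have h9 : Real.sqrt A * (‖f‖ / Real.sqrt A * Real.sqrt S) = ‖f‖ * Real.sqrt S := by
      field_simp
    have h10 : Real.sqrt A * ‖f‖ ^ 2 ≤ ‖f‖ * Real.sqrt S := by
      calc Real.sqrt A * ‖f‖ ^ 2 ≤ Real.sqrt A * (‖f‖ / Real.sqrt A * Real.sqrt S) :=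
            mul_le_mul_of_nonneg_left hmain hsA.le
        _ = ‖f‖ * Real.sqrt S := h9
    nlinarith [h10, hfpos]
  have h8 := mul_self_le_mul_self (by positivity) h7
  rw [Real.mul_self_sqrt hS0] at h8
  nlinarith [Real.sq_sqrt hA.le, Real.sqrt_nonneg A]

end riesz

section main

variable {H : Type*} [NormedAddCommGroup H] [InnerProductSpace ℂ H] [CompleteSpace H]

/-- Main lower bound: any multiplier sum is bounded below. -/
lemma main_lower {φ ψ : ℕ → H} {I : Set ℕ}
    {Aφ1 Aψ1 Bφ2 Bψ2 : ℝ} (hAφ1 : 0 < Aφ1) (hAψ1 : 0 < Aψ1)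
    (hBφ2 : 0 ≤ Bφ2) (hBψ2 : 0 ≤ Bψ2)
    {Bφ1 Bψ1 : ℝ}
    (hφ1 : IsRieszBasisWith (fun n : I => φ n) Aφ1 Bφ1)
    (hψ1 : IsRieszBasisWith (fun n : I => ψ n) Aψ1 Bψ1)
    (hφ2 : IsBesselWith (fun n : {n : ℕ // n ∉ I} => φ n) Bφ2)
    (hψ2 : IsBesselWith (fun n : {n : ℕ // n ∉ I} => ψ n) Bψ2)
    {m : ℕ → ℂ} {C : ℝ} (hm : ∀ n, ‖m n‖ ≤ C)
    {w : ℝ} (hw0 : 0 ≤ w) (hw : ∀ n : {n : ℕ // n ∉ I}, ‖m n‖ ≤ w)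
    {ε : ℝ} (hε : 0 < ε) (hεle : ∀ n : I, ε ≤ ‖m n‖)
    (hψsum : ∀ f : H, Summable fun n : ℕ => ‖⟪ψ n, f⟫_ℂ‖ ^ 2)
    (f s : H) (hs : HasSum (fun n : ℕ => (m n * ⟪ψ n, f⟫_ℂ) • φ n) s) :
    (ε * Real.sqrt Aφ1 * Real.sqrt Aψ1 - w * Real.sqrt Bφ2 * Real.sqrt Bψ2) * ‖f‖ ≤ ‖s‖ := by
  classical
  set c : ℕ → ℂ := fun n => m n * ⟪ψ n, f⟫_ℂ with hc
  have hC0 : 0 ≤ C := le_trans (norm_nonneg (m 0)) (hm 0)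
  have hcsq : Summable fun n => ‖c n‖ ^ 2 := by
    refine Summable.of_nonneg_of_le (fun n => sq_nonneg _) (fun n => ?_)
      (((hψsum f).mul_left (C ^ 2)))
    rw [hc, norm_mul, mul_pow]
    exact mul_le_mul_of_nonneg_right (pow_le_pow_left₀ (norm_nonneg _) (hm n) 2) (sq_nonneg _)
  -- the Riesz part
  have hcI : Summable fun n : I => ‖c n‖ ^ 2 := hcsq.subtype _
  obtain ⟨s₁, hs₁, hlow, -⟩ := hφ1.2 (fun n : I => c n) hcI
  -- lower bound for the Riesz part
  have hψI : Summable fun n : I => ‖⟪ψ (n:ℕ), f⟫_ℂ‖ ^ 2 := (hψsum f).subtype _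
  have hψlow := riesz_lower_frame hAψ1 hψ1 f hψI
  have hterm : ∀ n : I, ε ^ 2 * ‖⟪ψ (n:ℕ), f⟫_ℂ‖ ^ 2 ≤ ‖c (n:ℕ)‖ ^ 2 := by
    intro n
    rw [hc, norm_mul, mul_pow]
    exact mul_le_mul_of_nonneg_right (pow_le_pow_left₀ hε.le (hεle n) 2) (sq_nonneg _)
  have hsum1 : ε ^ 2 * ∑' n : I, ‖⟪ψ (n:ℕ), f⟫_ℂ‖ ^ 2 ≤ ∑' n : I, ‖c (n:ℕ)‖ ^ 2 := by
    rw [← tsum_mul_left]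
    exact Summable.tsum_le_tsum hterm (hψI.mul_left _) hcI
  have hs₁low : ε * Real.sqrt Aφ1 * Real.sqrt Aψ1 * ‖f‖ ≤ ‖s₁‖ := by
    have h1 : Aφ1 * (ε ^ 2 * (Aψ1 * ‖f‖ ^ 2)) ≤ ‖s₁‖ ^ 2 := by
      calc Aφ1 * (ε ^ 2 * (Aψ1 * ‖f‖ ^ 2))
          ≤ Aφ1 * (ε ^ 2 * ∑' n : I, ‖⟪ψ (n:ℕ), f⟫_ℂ‖ ^ 2) := by
            refine mul_le_mul_of_nonneg_left (mul_le_mul_of_nonneg_left hψlow (sq_nonneg ε))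
              hAφ1.le
        _ ≤ Aφ1 * ∑' n : I, ‖c (n:ℕ)‖ ^ 2 := mul_le_mul_of_nonneg_left hsum1 hAφ1.le
        _ ≤ ‖s₁‖ ^ 2 := hlow
    have h2 := Real.sqrt_le_sqrt h1
    rw [Real.sqrt_sq (norm_nonneg s₁), Real.sqrt_mul hAφ1.le, Real.sqrt_mul (sq_nonneg ε),
      Real.sqrt_sq hε.le, Real.sqrt_mul hAψ1.le, Real.sqrt_sq (norm_nonneg f)] at h2
    calc ε * Real.sqrt Aφ1 * Real.sqrt Aψ1 * ‖f‖
        = Real.sqrt Aφ1 * (ε * (Real.sqrt Aψ1 * ‖f‖)) := by ring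
      _ ≤ ‖s₁‖ := h2
  -- the Bessel part
  have hsI : HasSum ((fun n : ℕ => c n • φ n) ∘ ((↑) : I → ℕ)) s₁ := hs₁
  have hsc : Summable ((fun n : ℕ => c n • φ n) ∘ ((↑) : ↥(Iᶜ) → ℕ)) :=
    hs.summable.subtype _
  obtain ⟨s₂, hs₂⟩ := hsc
  have htot : HasSum (fun n : ℕ => c n • φ n) (s₁ + s₂) := hsI.add_compl hs₂
  have hseq : s = s₁ + s₂ := hs.unique htot
  have hs₂' : HasSum (fun n : {n : ℕ // n ∉ I} => (m (n:ℕ) * ⟪ψ (n:ℕ), f⟫_ℂ) • φ (n:ℕ)) s₂ := hs₂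
  have hs₂up : ‖s₂‖ ≤ w * Real.sqrt Bφ2 * Real.sqrt Bψ2 * ‖f‖ :=
    multiplier_piece_bound hφ2 hψ2 hBφ2 hBψ2 hw0 hw f s₂ hs₂'
  have htri : ‖s₁‖ ≤ ‖s‖ + ‖s₂‖ := by
    rw [hseq]
    calc ‖s₁‖ = ‖s₁ + s₂ - s₂‖ := by rw [add_sub_cancel_right]
      _ ≤ ‖s₁ + s₂‖ + ‖s₂‖ := norm_sub_le _ _
  nlinarith [hs₁low, hs₂up, htri, norm_nonneg f, norm_nonneg s₂]
end main

/-- if the frames `φ, ψ` contain Riesz bases (indexed by `I`) with lower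
bounds `Aφ1, Aψ1`, the remainders are Bessel with bounds `Bφ2, Bψ2`, and
`(sup_{n∉I}|m n|)·Bφ2^(1/2)·Bψ2^(1/2) < (inf_{n∈I}|m n|)·Aφ1^(1/2)·Aψ1^(1/2)`,
then the multiplier `M_{m,φ,ψ}` is bijective. -/
theorem multiplier_bijective_of_riesz_part
    {H : Type*} [NormedAddCommGroup H] [InnerProductSpace ℂ H] [CompleteSpace H]
    (φ ψ : ℕ → H)
    (hφframe : ∃ A B : ℝ, 0 < A ∧ IsFrameWith φ A B)
    (hψframe : ∃ A B : ℝ, 0 < A ∧ IsFrameWith ψ A B)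
    (I : Set ℕ)
    (Aφ1 Aψ1 Bφ2 Bψ2 : ℝ) (hAφ1 : 0 < Aφ1) (hAψ1 : 0 < Aψ1)
    (hφ1 : ∃ B1 : ℝ, IsRieszBasisWith (fun n : I => φ n) Aφ1 B1)
    (hψ1 : ∃ B1 : ℝ, IsRieszBasisWith (fun n : I => ψ n) Aψ1 B1)
    (hφ2 : IsBesselWith (fun n : {n : ℕ // n ∉ I} => φ n) Bφ2)
    (hψ2 : IsBesselWith (fun n : {n : ℕ // n ∉ I} => ψ n) Bψ2)
    (m : ℕ → ℂ) (hm : ∃ C : ℝ, ∀ n, ‖m n‖ ≤ C)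
    (M : H →L[ℂ] H)
    (hM : ∀ f : H, HasSum (fun n => (m n * ⟪ψ n, f⟫_ℂ) • φ n) (M f))
    (hcond : (⨆ n : {n : ℕ // n ∉ I}, ‖m n‖) * Real.sqrt Bφ2 * Real.sqrt Bψ2 <
      (⨅ n : I, ‖m n‖) * Real.sqrt Aφ1 * Real.sqrt Aψ1) :
    Function.Bijective M := by
  classical
  rcases subsingleton_or_nontrivial H with hsub | hnt
  · exact ⟨fun a b _ => Subsingleton.elim a b, fun y => ⟨0, Subsingleton.elim _ _⟩⟩
  obtain ⟨B1φ, hφ1⟩ := hφ1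
  obtain ⟨B1ψ, hψ1⟩ := hψ1
  obtain ⟨C, hmC⟩ := hm
  obtain ⟨Aφ, Bφ, hAφpos, hφfr⟩ := hφframe
  obtain ⟨Aψ, Bψ, hAψpos, hψfr⟩ := hψframe
  have hφsum : ∀ f : H, Summable fun n : ℕ => ‖⟪φ n, f⟫_ℂ‖ ^ 2 := fun f => by
    obtain ⟨s, hs, -⟩ := hφfr f; exact hs.summable
  have hψsum : ∀ f : H, Summable fun n : ℕ => ‖⟪ψ n, f⟫_ℂ‖ ^ 2 := fun f => by
    obtain ⟨s, hs, -⟩ := hψfr f; exact hs.summable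
  have hBφ2 : 0 ≤ Bφ2 := bessel_nonneg hφ2
  have hBψ2 : 0 ≤ Bψ2 := bessel_nonneg hψ2
  set w : ℝ := ⨆ n : {n : ℕ // n ∉ I}, ‖m n‖ with hwdef
  set ε : ℝ := ⨅ n : I, ‖m n‖ with hεdef
  have hw : ∀ n : {n : ℕ // n ∉ I}, ‖m (n:ℕ)‖ ≤ w := fun n =>
    le_ciSup ⟨C, by rintro _ ⟨k, rfl⟩; exact hmC k⟩ n
  have hw0 : 0 ≤ w := by
    rcases isEmpty_or_nonempty {n : ℕ // n ∉ I} with he | hne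
    · rw [hwdef, Real.iSup_of_isEmpty]
    · exact le_trans (norm_nonneg _) (hw (Classical.arbitrary _))
  have hβ0 : 0 ≤ w * Real.sqrt Bφ2 * Real.sqrt Bψ2 := by positivity
  have hαpos : 0 < ε * Real.sqrt Aφ1 * Real.sqrt Aψ1 := lt_of_le_of_lt hβ0 hcond
  have hε : 0 < ε := by
    by_contra h
    push_neg at h
    have : ε * Real.sqrt Aφ1 * Real.sqrt Aψ1 ≤ 0 := by
      have h1 : 0 ≤ Real.sqrt Aφ1 * Real.sqrt Aψ1 := by positivity
      nlinarith
    linarith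
  have hεle : ∀ n : I, ε ≤ ‖m (n:ℕ)‖ := fun n =>
    ciInf_le ⟨0, by rintro _ ⟨k, rfl⟩; exact norm_nonneg _⟩ n
  -- main lower bound for M
  have key : ∀ f : H,
      (ε * Real.sqrt Aφ1 * Real.sqrt Aψ1 - w * Real.sqrt Bφ2 * Real.sqrt Bψ2) * ‖f‖ ≤ ‖M f‖ :=
    fun f => main_lower hAφ1 hAψ1 hBφ2 hBψ2 hφ1 hψ1 hφ2 hψ2 hmC hw0 hw hε hεle hψsum f (M f)
      (hM f)
  set δ : ℝ := ε * Real.sqrt Aφ1 * Real.sqrt Aψ1 - w * Real.sqrt Bφ2 * Real.sqrt Bψ2 with hδdef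
  have hδpos : 0 < δ := sub_pos.mpr hcond
  have hinj : Function.Injective M := by
    intro a b hab
    have h1 := key (a - b)
    rw [map_sub, hab, sub_self, norm_zero] at h1
    have h2 : ‖a - b‖ ≤ 0 := by
      by_contra h
      push_neg at h
      nlinarith
    rw [← sub_eq_zero]
    exact norm_le_zero_iff.mp h2
  refine ⟨hinj, ?_⟩
  -- surjectivity
  have hbound : ∀ f : H, ‖f‖ ≤ (δ⁻¹ : ℝ) * ‖M f‖ := fun f => by
    rw [← div_eq_inv_mul, le_div_iff₀ hδpos]
    calc ‖f‖ * δ = δ * ‖f‖ := mul_comm _ _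
      _ ≤ ‖M f‖ := key f
  have hanti : AntilipschitzWith ⟨δ⁻¹, by positivity⟩ M :=
    ContinuousLinearMap.antilipschitz_of_bound M hbound
  have hclosed : IsClosed (Set.range M) := hanti.isClosed_range M.uniformContinuous
  have hclosedR : IsClosed ((LinearMap.range (M : H →ₗ[ℂ] H) : Submodule ℂ H) : Set H) := by
    rw [LinearMap.coe_range]; exact hclosed
  haveI : CompleteSpace (LinearMap.range (M : H →ₗ[ℂ] H) : Submodule ℂ H) := hclosedR.completeSpace_coe
  have horth : (LinearMap.range (M : H →ₗ[ℂ] H) : Submodule ℂ H)ᗮ = ⊥ := by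
    rw [Submodule.eq_bot_iff]
    intro g hg
    rw [Submodule.mem_orthogonal] at hg
    -- build the adjoint multiplier value at g
    set d : ℕ → ℂ := fun n => (starRingEnd ℂ) (m n) * ⟪φ n, g⟫_ℂ with hd
    have hC0 : 0 ≤ C := le_trans (norm_nonneg (m 0)) (hmC 0)
    have hdsq : Summable fun n => ‖d n‖ ^ 2 := by
      refine Summable.of_nonneg_of_le (fun n => sq_nonneg _) (fun n => ?_)
        ((hφsum g).mul_left (C ^ 2))
      rw [hd, norm_mul, mul_pow, RCLike.norm_conj]
      exact mul_le_mul_of_nonneg_right (pow_le_pow_left₀ (norm_nonneg _) (hmC n) 2) (sq_nonneg _)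
    obtain ⟨t₁, ht₁, -, -⟩ := hψ1.2 (fun n : I => d n) (hdsq.subtype _)
    obtain ⟨t₂, ht₂⟩ := bessel_synthesis hψ2 hBψ2
      (c := fun n : {n : ℕ // n ∉ I} => d n) (hdsq.subtype _)
    have ht₁' : HasSum ((fun n : ℕ => d n • ψ n) ∘ ((↑) : I → ℕ)) t₁ := ht₁
    have ht₂' : HasSum ((fun n : ℕ => d n • ψ n) ∘ ((↑) : ↥(Iᶜ) → ℕ)) t₂ := ht₂
    have hNt : HasSum (fun n : ℕ => d n • ψ n) (t₁ + t₂) := ht₁'.add_compl ht₂'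
    set t := t₁ + t₂ with htdef
    have hNt' : HasSum (fun n : ℕ => ((starRingEnd ℂ) (m n) * ⟪φ n, g⟫_ℂ) • ψ n) t := hNt
    -- lower bound for the adjoint multiplier
    have hw' : ∀ n : {n : ℕ // n ∉ I}, ‖(starRingEnd ℂ) (m (n:ℕ))‖ ≤ w := fun n => by
      rw [RCLike.norm_conj]; exact hw n
    have hεle' : ∀ n : I, ε ≤ ‖(starRingEnd ℂ) (m (n:ℕ))‖ := fun n => by
      rw [RCLike.norm_conj]; exact hεle n
    have hmC' : ∀ n, ‖(starRingEnd ℂ) (m n)‖ ≤ C := fun n => by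
      rw [RCLike.norm_conj]; exact hmC n
    have hlowg := main_lower hAψ1 hAφ1 hBψ2 hBφ2 hψ1 hφ1 hψ2 hφ2 hmC' hw0 hw' hε hεle'
      hφsum g t hNt'
    -- t = 0 since g ⟂ range M
    have htzero : t = 0 := by
      have h1 : HasSum (fun n : ℕ => (m n * ⟪ψ n, t⟫_ℂ) * ⟪g, φ n⟫_ℂ) ⟪g, M t⟫_ℂ := by
        have := (innerSL ℂ g).hasSum (hM t)
        simpa only [innerSL_apply_apply, inner_smul_right] using this
      have h2 : HasSum (fun n : ℕ => d n * ⟪t, ψ n⟫_ℂ) ⟪t, t⟫_ℂ := by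
        have := (innerSL ℂ t).hasSum hNt
        simpa only [innerSL_apply_apply, inner_smul_right] using this
      have h3 : HasSum (fun n : ℕ => star ((m n * ⟪ψ n, t⟫_ℂ) * ⟪g, φ n⟫_ℂ))
          (star ⟪g, M t⟫_ℂ) := h1.star
      have hfun : (fun n : ℕ => star ((m n * ⟪ψ n, t⟫_ℂ) * ⟪g, φ n⟫_ℂ))
          = fun n : ℕ => d n * ⟪t, ψ n⟫_ℂ := by
        funext n
        simp only [hd, star_mul', RCLike.star_def, map_mul, inner_conj_symm]
        ring
      rw [hfun] at h3
      have h4 : ⟪t, t⟫_ℂ = star ⟪g, M t⟫_ℂ := h2.unique h3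
      have h5 : ⟪(M t : H), g⟫_ℂ = 0 := hg (M t) (LinearMap.mem_range_self _ t)
      rw [RCLike.star_def, inner_conj_symm] at h4
      have h6 : ⟪t, t⟫_ℂ = 0 := h4.trans h5
      exact inner_self_eq_zero.mp h6
    rw [htzero, norm_zero] at hlowg
    have hδ' : 0 < ε * Real.sqrt Aψ1 * Real.sqrt Aφ1 - w * Real.sqrt Bψ2 * Real.sqrt Bφ2 := by
      nlinarith [hδpos]
    have : ‖g‖ ≤ 0 := by nlinarith [norm_nonneg g]
    exact norm_le_zero_iff.mp this
  have htop : (LinearMap.range (M : H →ₗ[ℂ] H) : Submodule ℂ H) = ⊤ :=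
    Submodule.orthogonal_eq_bot_iff.mp horth
  exact LinearMap.range_eq_top.mp htop
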